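/- Let Δ < 0 and 0 < μ < 1, and set α = √(-Δ/(1-μ²)), β = μα. If s = ξ + iη with ξ, η real satisfies ((ξ + a/2)²)/α² + η²/β² = 1 (i.e. s lies on the ellipse centered at -a/2 with semi-axes α, β), then Im(s - μ·√((s + a/2)² + Δ)) = 0, where the square root branch is chosen continuously along the ellipse with √((s+a/2)²+Δ) real positive at s = p₂ = -a/2 + α. -/

import Mathlib

open Complex

/-- If `s = ξ + iη` lies on the ellipse centered at `-a/2` with semi-axes
`α = √(-Δ/(1-μ²))` and `β = μα` (`Δ < 0`, `0 < μ < 1`), then, for the branch of the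
square root chosen continuously along the ellipse (real positive at `p₂ = -a/2 + α`),
`Im(s - μ √((s+a/2)² + Δ)) = 0`: i.e. there is a square root `w` of `(s+a/2)² + Δ`
with `Im (s - μ w) = 0`. -/
theorem ellipse_is_steepest_descent (a Δ μ α β ξ η : ℝ) (hΔ : Δ < 0)
    (hμ0 : 0 < μ) (hμ1 : μ < 1)
    (hα : α = Real.sqrt (-Δ / (1 - μ ^ 2))) (hβ : β = μ * α)
    (hell : (ξ + a / 2) ^ 2 / α ^ 2 + η ^ 2 / β ^ 2 = 1) :
    ∃ w : ℂ, w ^ 2 = (((ξ : ℂ) + η * Complex.I) + a / 2) ^ 2 + (Δ : ℂ) ∧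
      ((((ξ : ℂ) + η * Complex.I) - (μ : ℂ) * w).im = 0) := by
  have hμ2 : (0:ℝ) < 1 - μ ^ 2 := by nlinarith
  have hq : (0:ℝ) < -Δ / (1 - μ ^ 2) := div_pos (by linarith) hμ2
  have hαpos : 0 < α := by
    rw [hα]; exact Real.sqrt_pos.2 hq
  have hα2 : α ^ 2 = -Δ / (1 - μ ^ 2) := by
    rw [hα, Real.sq_sqrt hq.le]
  have hμne : μ ≠ 0 := ne_of_gt hμ0
  have hαne : α ≠ 0 := ne_of_gt hαpos
  have hΔeq : Δ = -((1 - μ ^ 2) * α ^ 2) := by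
    have h : α ^ 2 * (1 - μ ^ 2) = -Δ := by
      rw [hα2]; field_simp
    linear_combination h
  have hE2 : μ ^ 2 * (ξ + a / 2) ^ 2 + η ^ 2 = μ ^ 2 * α ^ 2 := by
    rw [hβ] at hell
    field_simp at hell
    nlinarith [hell, mul_pos hαpos hαpos, sq_nonneg α]
  have key2 : μ ^ 4 * (ξ + a / 2) ^ 2 - η ^ 2 =
      μ ^ 2 * ((ξ + a / 2) ^ 2 - η ^ 2 + Δ) := by
    rw [hΔeq]; linear_combination (μ ^ 2 - 1) * hE2
  have hμc : (μ : ℂ) ≠ 0 := by exact_mod_cast hμne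
  have keyC : (μ : ℂ) ^ 4 * ((ξ : ℂ) + a / 2) ^ 2 - (η : ℂ) ^ 2 =
      (μ : ℂ) ^ 2 * (((ξ : ℂ) + a / 2) ^ 2 - (η : ℂ) ^ 2 + (Δ : ℂ)) := by
    exact_mod_cast congrArg (fun x : ℝ => (x : ℂ)) key2
  refine ⟨((μ * (ξ + a / 2) : ℝ) : ℂ) + ((η / μ : ℝ) : ℂ) * Complex.I, ?_, ?_⟩
  · have hI : Complex.I ^ 2 = -1 := Complex.I_sq
    push_cast
    field_simp
    linear_combination (4:ℂ)*keyC + (4*(η:ℂ)^2 - 4*(μ:ℂ)^2*(η:ℂ)^2) * hI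
  · simp [Complex.ext_iff, Complex.add_im, Complex.mul_im]
    field_simp
    ring
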